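/- For every complex number $\lambda$ with $|\lambda| \geq 2$, the subgroup of $\mathrm{PSL}_2(\mathbb{C})$ generated by the images of the matrices $T^\lambda = \begin{pmatrix} 1 & \lambda \\ 0 & 1 \end{pmatrix}$ and $V^\lambda = \begin{pmatrix} 1 & 0 \\ \lambda & 1 \end{pmatrix}$ is freely generated by these two elements. -/

import Mathlib

/-- `PSL₂(ℂ) = SL₂(ℂ)/center`. -/
abbrev PSL2C := Matrix.SpecialLinearGroup (Fin 2) ℂ ⧸
  Subgroup.center (Matrix.SpecialLinearGroup (Fin 2) ℂ)

/-- The image of `T^λ = (1 λ; 0 1)` in `PSL₂(ℂ)`. -/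
def Tpsl (lam : ℂ) : PSL2C :=
  QuotientGroup.mk (⟨!![1, lam; 0, 1], by simp [Matrix.det_fin_two_of]⟩ :
    Matrix.SpecialLinearGroup (Fin 2) ℂ)

/-- The image of `V^λ = (1 0; λ 1)` in `PSL₂(ℂ)`. -/
def Vpsl (lam : ℂ) : PSL2C :=
  QuotientGroup.mk (⟨!![1, 0; lam, 1], by simp [Matrix.det_fin_two_of]⟩ :
    Matrix.SpecialLinearGroup (Fin 2) ℂ)

open Pointwise

abbrev SL2C := Matrix.SpecialLinearGroup (Fin 2) ℂ

def Tmat (lam : ℂ) : SL2C := ⟨!![1, lam; 0, 1], by simp [Matrix.det_fin_two_of]⟩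
def Vmat (lam : ℂ) : SL2C := ⟨!![1, 0; lam, 1], by simp [Matrix.det_fin_two_of]⟩

lemma Tmat_mul (a b : ℂ) : Tmat a * Tmat b = Tmat (a + b) := by
  apply Subtype.ext
  show (!![1, a; 0, 1] : Matrix (Fin 2) (Fin 2) ℂ) * !![1, b; 0, 1] = _
  ext i j
  fin_cases i <;> fin_cases j <;>
    simp [Tmat, Matrix.mul_apply, Fin.sum_univ_two] <;> ring

lemma Vmat_mul (a b : ℂ) : Vmat a * Vmat b = Vmat (a + b) := by
  apply Subtype.ext
  show (!![1, 0; a, 1] : Matrix (Fin 2) (Fin 2) ℂ) * !![1, 0; b, 1] = _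
  ext i j
  fin_cases i <;> fin_cases j <;>
    simp [Vmat, Matrix.mul_apply, Fin.sum_univ_two] <;> ring

lemma Tmat_zero : Tmat 0 = 1 := by
  apply Subtype.ext
  ext i j
  fin_cases i <;> fin_cases j <;> simp [Tmat, Matrix.one_apply]

lemma Vmat_zero : Vmat 0 = 1 := by
  apply Subtype.ext
  ext i j
  fin_cases i <;> fin_cases j <;> simp [Vmat, Matrix.one_apply]

lemma Tmat_zpow (lam : ℂ) (n : ℤ) : Tmat lam ^ n = Tmat (n * lam) := by
  induction n using Int.induction_on with
  | zero => simpa using Tmat_zero.symm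
  | succ i ih =>
    rw [zpow_add_one, ih, Tmat_mul]
    push_cast
    ring_nf
  | pred i ih =>
    rw [zpow_sub_one, ih]
    have h : (Tmat lam)⁻¹ = Tmat (-lam) := by
      apply inv_eq_of_mul_eq_one_right
      rw [Tmat_mul]; simpa using Tmat_zero
    rw [h, Tmat_mul]
    push_cast
    ring_nf

lemma Vmat_zpow (lam : ℂ) (n : ℤ) : Vmat lam ^ n = Vmat (n * lam) := by
  induction n using Int.induction_on with
  | zero => simpa using Vmat_zero.symm
  | succ i ih =>
    rw [zpow_add_one, ih, Vmat_mul]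
    push_cast
    ring_nf
  | pred i ih =>
    rw [zpow_sub_one, ih]
    have h : (Vmat lam)⁻¹ = Vmat (-lam) := by
      apply inv_eq_of_mul_eq_one_right
      rw [Vmat_mul]; simpa using Vmat_zero
    rw [h, Vmat_mul]
    push_cast
    ring_nf

noncomputable def entryAbs (i : Fin 2) : PSL2C → ℝ :=
  Quotient.lift (fun A : SL2C => ‖A.1 i 0‖) (by
    intro A B h
    replace h : A⁻¹ * B ∈ Subgroup.center SL2C := QuotientGroup.leftRel_apply.mp h
    have hs := Matrix.SpecialLinearGroup.scalar_eq_self_of_mem_center h 0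
    set r : ℂ := ((A⁻¹ * B : SL2C) : Matrix (Fin 2) (Fin 2) ℂ) 0 0 with hr
    have hr2 : r ^ 2 = 1 := by
      have hdet : ((Matrix.scalar (Fin 2)) r).det = 1 := by
        rw [hs]; exact (A⁻¹ * B : SL2C).2
      simpa [Matrix.det_smul, smul_eq_mul] using hdet
    have habs : ‖r‖ = 1 := by
      have h2 : ‖r‖ ^ 2 = 1 := by rw [← norm_pow, hr2]; simp
      have h0 : (‖r‖ - 1) * (‖r‖ + 1) = 0 := by nlinarith
      rcases mul_eq_zero.mp h0 with h | h
      · linarith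
      · have := norm_nonneg r; linarith
    have hB : (B : Matrix (Fin 2) (Fin 2) ℂ) = r • (A : Matrix (Fin 2) (Fin 2) ℂ) := by
      have hAB : (B : SL2C) = A * (A⁻¹ * B) := by group
      calc (B : Matrix (Fin 2) (Fin 2) ℂ)
          = (A : Matrix (Fin 2) (Fin 2) ℂ) * ((A⁻¹ * B : SL2C) : Matrix (Fin 2) (Fin 2) ℂ) := by
            rw [← Matrix.SpecialLinearGroup.coe_mul, ← hAB]
        _ = (A : Matrix (Fin 2) (Fin 2) ℂ) * ((Matrix.scalar (Fin 2)) r) := by rw [hs]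
        _ = r • (A : Matrix (Fin 2) (Fin 2) ℂ) := by
            rw [Matrix.scalar_apply]
            ext i j
            simp [Matrix.mul_diagonal, Matrix.smul_apply, mul_comm]
    show ‖(A : Matrix (Fin 2) (Fin 2) ℂ) i 0‖ =
      ‖(B : Matrix (Fin 2) (Fin 2) ℂ) i 0‖
    rw [hB]
    simp [Matrix.smul_apply, habs])

lemma entryAbs_mk (i : Fin 2) (A : SL2C) :
    entryAbs i (QuotientGroup.mk A) = ‖A.1 i 0‖ := rfl

def XT : Set PSL2C := {x | entryAbs 1 x < entryAbs 0 x}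
def XV : Set PSL2C := {x | entryAbs 0 x < entryAbs 1 x}

lemma Tmat_mul_entry (c : ℂ) (A : SL2C) :
    ((Tmat c * A : SL2C) : Matrix (Fin 2) (Fin 2) ℂ) 0 0 = A.1 0 0 + c * A.1 1 0 ∧
    ((Tmat c * A : SL2C) : Matrix (Fin 2) (Fin 2) ℂ) 1 0 = A.1 1 0 := by
  constructor <;> rw [Matrix.SpecialLinearGroup.coe_mul] <;> simp [Tmat, Matrix.mul_apply, Fin.sum_univ_two]

lemma Vmat_mul_entry (c : ℂ) (A : SL2C) :
    ((Vmat c * A : SL2C) : Matrix (Fin 2) (Fin 2) ℂ) 0 0 = A.1 0 0 ∧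
    ((Vmat c * A : SL2C) : Matrix (Fin 2) (Fin 2) ℂ) 1 0 = c * A.1 0 0 + A.1 1 0 := by
  constructor <;> rw [Matrix.SpecialLinearGroup.coe_mul] <;> simp [Vmat, Matrix.mul_apply, Fin.sum_univ_two]

lemma abs_key {x y : ℂ} {c : ℂ} (hc : 2 ≤ ‖c‖)
    (hxy : ‖x‖ < ‖y‖) :
    ‖y‖ < ‖x + c * y‖ := by
  have htri : ‖c * y‖ ≤ ‖x + c * y‖ + ‖x‖ := by
    calc ‖c * y‖ = ‖(x + c * y) - x‖ := by ring_nf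
      _ ≤ ‖x + c * y‖ + ‖x‖ := norm_sub_le _ _
  have hm : ‖c * y‖ = ‖c‖ * ‖y‖ := norm_mul _ _
  nlinarith [norm_nonneg y, norm_nonneg x]

lemma Tsmul_mem (c : ℂ) (hc : 2 ≤ ‖c‖) (x : PSL2C) (hx : x ∈ XV) :
    (QuotientGroup.mk (Tmat c) : PSL2C) * x ∈ XT := by
  obtain ⟨A, rfl⟩ := QuotientGroup.mk_surjective x
  rw [← QuotientGroup.mk_mul]
  have h := Tmat_mul_entry c A
  show entryAbs 1 _ < entryAbs 0 _
  rw [entryAbs_mk, entryAbs_mk, h.1, h.2]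
  exact abs_key hc hx

lemma Vsmul_mem (c : ℂ) (hc : 2 ≤ ‖c‖) (x : PSL2C) (hx : x ∈ XT) :
    (QuotientGroup.mk (Vmat c) : PSL2C) * x ∈ XV := by
  obtain ⟨A, rfl⟩ := QuotientGroup.mk_surjective x
  rw [← QuotientGroup.mk_mul]
  have h := Vmat_mul_entry c A
  show entryAbs 0 _ < entryAbs 1 _
  rw [entryAbs_mk, entryAbs_mk, h.1, h.2]
  have := abs_key hc hx
  rw [add_comm] at this
  exact this

/-- For `|λ| ≥ 2`, the subgroup of `PSL₂(ℂ)` generated by `T^λ` and `V^λ` is freely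
generated by them: the induced map from the free group on two generators is injective. -/
lemma abs_int_mul (lam : ℂ) (hlam : 2 ≤ ‖lam‖) {n : ℤ} (hn : n ≠ 0) :
    2 ≤ ‖(n : ℂ) * lam‖ := by
  rw [norm_mul]
  have h1 : (1 : ℝ) ≤ ‖(n : ℂ)‖ := by
    rw [Complex.norm_intCast]
    exact_mod_cast Int.one_le_abs hn
  nlinarith

lemma Tpsl_zpow_smul (lam : ℂ) (hlam : 2 ≤ ‖lam‖) {n : ℤ} (hn : n ≠ 0) :
    (Tpsl lam) ^ n • XV ⊆ XT := by
  intro x hx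
  rw [Set.mem_smul_set] at hx
  obtain ⟨y, hy, rfl⟩ := hx
  have h1 : Tpsl lam = QuotientGroup.mk (Tmat lam) := rfl
  have h2 : (Tpsl lam) ^ n = QuotientGroup.mk (Tmat ((n : ℂ) * lam)) := by
    rw [h1, ← Tmat_zpow, ← QuotientGroup.mk_zpow]
  rw [h2, smul_eq_mul]
  exact Tsmul_mem _ (abs_int_mul lam hlam hn) y hy

lemma Vpsl_zpow_smul (lam : ℂ) (hlam : 2 ≤ ‖lam‖) {n : ℤ} (hn : n ≠ 0) :
    (Vpsl lam) ^ n • XT ⊆ XV := by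
  intro x hx
  rw [Set.mem_smul_set] at hx
  obtain ⟨y, hy, rfl⟩ := hx
  have h1 : Vpsl lam = QuotientGroup.mk (Vmat lam) := rfl
  have h2 : (Vpsl lam) ^ n = QuotientGroup.mk (Vmat ((n : ℂ) * lam)) := by
    rw [h1, ← Vmat_zpow, ← QuotientGroup.mk_zpow]
  rw [h2, smul_eq_mul]
  exact Vsmul_mem _ (abs_int_mul lam hlam hn) y hy

theorem free_group_on_T_V (lam : ℂ) (hlam : 2 ≤ ‖lam‖) :
    Function.Injective
      (FreeGroup.lift (fun b : Bool => if b then Tpsl lam else Vpsl lam)) := by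
  set a : Bool → PSL2C := fun b => if b then Tpsl lam else Vpsl lam with ha
  have key : FreeGroup.lift a =
      (Monoid.CoprodI.lift fun i : Bool => FreeGroup.lift fun _ : Unit => a i).comp
        (@freeGroupEquivCoprodI Bool).toMonoidHom := by
    ext i
    simp
  rw [key, MonoidHom.coe_comp]
  refine Function.Injective.comp ?_ (MulEquiv.injective freeGroupEquivCoprodI)
  apply Monoid.CoprodI.lift_injective_of_ping_pong _ ?_ (fun b => if b then XT else XV) ?_ ?_ ?_
  · right
    exact ⟨true, le_trans (by exact_mod_cast (Cardinal.nat_lt_aleph0 3).le) (Cardinal.aleph0_le_mk (FreeGroup Unit))⟩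
  · intro b
    cases b
    · refine ⟨QuotientGroup.mk (⟨!![0, -1; 1, 0], by simp [Matrix.det_fin_two_of]⟩ : SL2C), ?_⟩
      show ‖(!![0, -1; 1, 0] : Matrix (Fin 2) (Fin 2) ℂ) 0 0‖ < ‖(!![0, -1; 1, 0] : Matrix (Fin 2) (Fin 2) ℂ) 1 0‖
      norm_num
    · refine ⟨QuotientGroup.mk (1 : SL2C), ?_⟩
      show entryAbs 1 _ < entryAbs 0 _
      rw [entryAbs_mk, entryAbs_mk]
      simp [Matrix.SpecialLinearGroup.coe_one, Matrix.one_apply]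
  · intro b c hbc
    have hd : Disjoint XT XV := by
      rw [Set.disjoint_left]
      intro x hx hx'
      simp only [XT, XV, Set.mem_setOf_eq] at hx hx'
      exact lt_asymm hx hx'
    cases b <;> cases c <;> simp_all <;> [exact hd.symm; exact hd]
  · intro b c hbc
    refine FreeGroup.freeGroupUnitEquivInt.forall_congr_left.mpr ?_
    intro n hne1
    change FreeGroup.lift (fun _ => a b) (FreeGroup.of () ^ n) • (if c then XT else XV) ⊆ (if b then XT else XV)
    simp only [map_zpow, FreeGroup.lift_apply_of]
    have hnne0 : n ≠ 0 := by
      rintro rfl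
      apply hne1
      simp [FreeGroup.freeGroupUnitEquivInt]
    cases b <;> cases c <;> simp_all [ha]
    · exact Vpsl_zpow_smul lam hlam hnne0
    · exact Tpsl_zpow_smul lam hlam hnne0
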